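/- Let α > 0, ε > 0, P > 0. For c ∈ ℝ define p(c) := min(max(ε·c/(2·α), 0), P) and F(p, c) := (α/ε)·p² − c·p. Then for all c, ĉ ∈ ℝ, 0 ≤ F(p(ĉ), c) − F(p(c), c) ≤ (ε/(2·α))·(c − ĉ)². -/

import Mathlib

/-- The quadratic queue-price objective `F(p, c) = (α/ε)·p² − c·p`. -/
noncomputable def qpObjective (α ε p c : ℝ) : ℝ := (α / ε) * p ^ 2 - c * p

/-- The clamped minimizer `p(c) = clamp(ε·c/(2·α); [0, P])`. -/
noncomputable def qpMinimizer (α ε P c : ℝ) : ℝ := min (max (ε * c / (2 * α)) 0) P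

lemma clamp_mem (P m : ℝ) (hP : 0 < P) :
    0 ≤ min (max m 0) P ∧ min (max m 0) P ≤ P :=
  ⟨le_min (le_max_right m 0) hP.le, min_le_right _ _⟩

lemma clamp_proj (P m x : ℝ) (hP : 0 < P) (hx0 : 0 ≤ x) (hxP : x ≤ P) :
    (x - min (max m 0) P) * (m - min (max m 0) P) ≤ 0 := by
  rcases le_total m 0 with h0 | h0
  · rw [max_eq_right h0, min_eq_left hP.le]
    nlinarith
  · rw [max_eq_left h0]
    rcases le_total m P with h1 | h1
    · rw [min_eq_left h1]; nlinarith
    · rw [min_eq_right h1]; nlinarith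

lemma clamp_lip (P a b : ℝ) (hP : 0 < P) :
    (min (max a 0) P - min (max b 0) P) ^ 2 ≤ (a - b) ^ 2 := by
  rcases le_total a 0 with ha0 | ha0 <;> rcases le_total b 0 with hb0 | hb0 <;>
    rcases le_total a P with haP | haP <;> rcases le_total b P with hbP | hbP <;>
    simp only [max_eq_right, max_eq_left, min_eq_left, min_eq_right, ha0, hb0, haP, hbP,
      hP.le] <;>
    nlinarith

/-- Perturbation lemma for the clamped quadratic minimizer: evaluating
`F(·, c)` at the minimizer computed from an approximated backlog `chat`
incurs an optimality loss of at most `(ε/(2·α))·(c − chat)²`. -/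
theorem clamped_quadratic_perturbation
    (α ε P : ℝ) (hα : 0 < α) (hε : 0 < ε) (hP : 0 < P) :
    ∀ c chat : ℝ,
      0 ≤ qpObjective α ε (qpMinimizer α ε P chat) c
            - qpObjective α ε (qpMinimizer α ε P c) c ∧
      qpObjective α ε (qpMinimizer α ε P chat) c
            - qpObjective α ε (qpMinimizer α ε P c) c
        ≤ (ε / (2 * α)) * (c - chat) ^ 2 := by
  intro c chat
  set u := ε * c / (2 * α) with hu
  set v := ε * chat / (2 * α) with hv
  set p := min (max u 0) P with hp
  set q := min (max v 0) P with hq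
  have hpm := clamp_mem P u hP
  have hqm := clamp_mem P v hP
  have hproj_c := clamp_proj P u q hP hqm.1 hqm.2
  have hproj_ch := clamp_proj P v p hP hpm.1 hpm.2
  have hlip := clamp_lip P u v hP
  have hc : c = 2 * (α / ε) * u := by
    rw [hu]; field_simp
  have hch : chat = 2 * (α / ε) * v := by
    rw [hv]; field_simp
  have hk : 0 < α / ε := div_pos hα hε
  have hkinv : ε / (2 * α) = 1 / (2 * (α / ε)) := by
    field_simp
  simp only [qpObjective, qpMinimizer, ← hu, ← hv, ← hp, ← hq]
  constructor
  · nlinarith [sq_nonneg (q - p)]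
  · have hbound : ε / (2 * α) * (c - chat) ^ 2 = 2 * (α / ε) * (u - v) ^ 2 := by
      rw [hu, hv]; field_simp
    have h1 : (α / ε) * p ^ 2 - chat * p - ((α / ε) * q ^ 2 - chat * q) ≥ 0 := by
      rw [hch]; nlinarith [sq_nonneg (p - q)]
    rw [hbound, hc] at *
    nlinarith [hk.le, hlip, h1, sq_nonneg ((u - v) - (p - q)), sq_nonneg ((u - v) + (p - q)),
      mul_nonneg hk.le (sq_nonneg ((u - v) - (p - q))),
      mul_nonneg hk.le (sq_nonneg ((u - v) + (p - q)))]
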